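/- Let r ≥ 1, x > 0, and k an integer with 2 ≤ k < 7/4 + r/2. On the region S = [N,∞)×[ε,c] with constants chosen so that f_r(xλ₂) > 0 on [0,c] and |f_r(xλ₁)| < f_r(xλ₂) on S, the function φ(λ₁,λ₂) = |f_r(xλ₁) − f_r(xλ₂)|^{2k}/(λ₁²−λ₂²)^{2k−2} · (λ₁λ₂)^{1+2r} satisfies ∫_S φ = ∞. -/

import Mathlib

open MeasureTheory Filter
open scoped ENNReal NNReal

/-- The entire extension of `f_r(s) = J_r(s)/s^r`, via its power series. -/
noncomputable def fr (r : ℕ) (s : ℝ) : ℝ :=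
  ∑' l : ℕ, ((-1 : ℝ)) ^ l * s ^ (2 * l) /
    ((2 : ℝ) ^ (2 * l + r) * (l.factorial : ℝ) * ((r + l).factorial : ℝ))

namespace FrAux

noncomputable def co (r l : ℕ) : ℝ :=
  ((-1 : ℝ)) ^ l / ((2 : ℝ) ^ (2 * l + r) * (l.factorial : ℝ) * ((r + l).factorial : ℝ))

lemma den_pos (r l : ℕ) :
    (0:ℝ) < (2 : ℝ) ^ (2 * l + r) * (l.factorial : ℝ) * ((r + l).factorial : ℝ) := by
  positivity

lemma co_ne_zero (r l : ℕ) : co r l ≠ 0 := by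
  unfold co
  apply div_ne_zero
  · exact pow_ne_zero _ (by norm_num)
  · exact ne_of_gt (den_pos r l)

lemma abs_co (r l : ℕ) :
    |co r l| = ((2 : ℝ) ^ (2 * l + r) * (l.factorial : ℝ) * ((r + l).factorial : ℝ))⁻¹ := by
  unfold co
  rw [abs_div, abs_pow, abs_neg, abs_one, one_pow, abs_of_pos (den_pos r l), one_div]

lemma ratio_le (r n : ℕ) : ‖co r (n+1)‖ / ‖co r n‖ ≤ 1 / (n+1 : ℝ) := by
  have hD := den_pos r n
  have hD' := den_pos r (n+1)
  rw [Real.norm_eq_abs, Real.norm_eq_abs, abs_co, abs_co, inv_div_inv]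
  rw [div_le_div_iff₀ (by positivity) (by positivity)]
  have h1 : (2:ℝ) ^ (2 * (n+1) + r) = (2:ℝ) ^ (2 * n + r) * 4 := by
    rw [show 2 * (n+1) + r = (2 * n + r) + 2 by ring, pow_add]; norm_num
  have h2 : ((n+1).factorial : ℝ) = (n.factorial : ℝ) * (n+1) := by
    rw [Nat.factorial_succ]; push_cast; ring
  have h3 : ((r + (n+1)).factorial : ℝ) = ((r+n).factorial : ℝ) * (r+n+1) := by
    rw [show r + (n+1) = (r + n) + 1 by ring, Nat.factorial_succ]; push_cast; ring
  rw [h1, h2, h3]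
  have hn : (0:ℝ) ≤ n := Nat.cast_nonneg n
  have hfn : (1:ℝ) ≤ (n.factorial : ℝ) := by exact_mod_cast Nat.one_le_iff_ne_zero.2 n.factorial_ne_zero
  have hfrn : (1:ℝ) ≤ ((r+n).factorial : ℝ) := by exact_mod_cast Nat.one_le_iff_ne_zero.2 (r+n).factorial_ne_zero
  have hr : (0:ℝ) ≤ r := Nat.cast_nonneg r
  nlinarith [hD, mul_pos hD (show (0:ℝ) < (n:ℝ)+1 by linarith)]

lemma ratio_tendsto (r : ℕ) :
    Tendsto (fun n : ℕ => ‖co r (n+1)‖ / ‖co r n‖) atTop (nhds 0) := by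
  apply squeeze_zero (fun n => by positivity) (ratio_le r)
  exact tendsto_one_div_add_atTop_nhds_zero_nat

noncomputable def P (r : ℕ) : FormalMultilinearSeries ℝ ℝ ℝ :=
  FormalMultilinearSeries.ofScalars ℝ (co r)

lemma radius_top (r : ℕ) : (P r).radius = ⊤ :=
  FormalMultilinearSeries.ofScalars_radius_eq_top_of_tendsto ℝ (co r)
    (Eventually.of_forall (co_ne_zero r)) (ratio_tendsto r)

noncomputable def F (r : ℕ) : ℝ → ℝ := (P r).sum

lemma hasF (r : ℕ) : HasFPowerSeriesOnBall (F r) (P r) 0 ⊤ := by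
  have := (P r).hasFPowerSeriesOnBall (by rw [radius_top]; exact ENNReal.zero_lt_top)
  rwa [radius_top] at this

lemma F_eq (r : ℕ) (t : ℝ) : F r t = ∑' l : ℕ, co r l * t ^ l := by
  have := FormalMultilinearSeries.ofScalars_sum_eq (E := ℝ) (co r) t
  simpa [F, P, FormalMultilinearSeries.ofScalarsSum, smul_eq_mul] using this

lemma fr_eq (r : ℕ) (s : ℝ) : fr r s = F r (s ^ 2) := by
  rw [F_eq, fr]
  refine tsum_congr fun l => ?_
  rw [co, ← pow_mul]
  ring

lemma F_analytic (r : ℕ) : AnalyticOnNhd ℝ (F r) Set.univ := by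
  intro z _
  exact (hasF r).analyticAt_of_mem (by simp)

lemma F_cont (r : ℕ) : Continuous (F r) := by
  have := (F_analytic r)
  exact continuousOn_univ.1 (fun z hz => ((this z hz).continuousAt).continuousWithinAt)

lemma F_deriv0 (r : ℕ) : deriv (F r) 0 = co r 1 := by
  rw [(hasF r).hasFPowerSeriesAt.deriv]
  show (P r) 1 (fun _ => 1) = co r 1
  rw [P, FormalMultilinearSeries.ofScalars_apply_eq]
  simp

end FrAux

namespace FrAux

lemma fr_cont (r : ℕ) (x : ℝ) : Continuous fun s : ℝ => fr r (x * s) := by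
  have : (fun s : ℝ => fr r (x * s)) = fun s => F r ((x * s) ^ 2) := by
    funext s; exact fr_eq r (x * s)
  rw [this]
  exact (F_cont r).comp (by continuity)

lemma exists_ne (r : ℕ) {x ε c : ℝ} (hx : 0 < x) (hε : 0 < ε) (hεc : ε < c) :
    ∃ s₁ ∈ Set.Icc ε c, ∃ s₂ ∈ Set.Icc ε c, fr r (x * s₁) ≠ fr r (x * s₂) := by
  by_contra h
  push_neg at h
  set u := (x * ε) ^ 2 with hu
  set v := (x * c) ^ 2 with hv
  have hxε : 0 < x * ε := by positivity
  have hxc : x * ε < x * c := by nlinarith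
  have huv : u < v := by
    rw [hu, hv]
    exact pow_lt_pow_left₀ hxc hxε.le (by norm_num)
  have hεmem : ε ∈ Set.Icc ε c := ⟨le_refl _, hεc.le⟩
  have hconst : ∀ t ∈ Set.Icc u v, F r t = F r u := by
    intro t ht
    have ht0 : 0 ≤ t := le_trans (show (0:ℝ) ≤ u by rw [hu]; positivity) ht.1
    set s := Real.sqrt t / x with hs
    have hsqrt_lb : x * ε ≤ Real.sqrt t := by
      have := Real.sqrt_le_sqrt ht.1
      rwa [hu, Real.sqrt_sq hxε.le] at this
    have hsqrt_ub : Real.sqrt t ≤ x * c := by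
      have := Real.sqrt_le_sqrt ht.2
      rwa [hv, Real.sqrt_sq (show (0:ℝ) ≤ x * c by nlinarith)] at this
    have hsmem : s ∈ Set.Icc ε c := by
      constructor
      · rw [hs, le_div_iff₀ hx]; linarith [hsqrt_lb]
      · rw [hs, div_le_iff₀ hx]; linarith [hsqrt_ub]
    have hxs : x * s = Real.sqrt t := by
      rw [hs]; field_simp
    have h1 : fr r (x * s) = fr r (x * ε) := h s hsmem ε hεmem
    rw [fr_eq, fr_eq, hxs, Real.sq_sqrt ht0] at h1
    rw [h1, hu]
  set z0 := (u + v) / 2 with hz0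
  have hval : Set.EqOn (F r) (fun _ => F r u) Set.univ := by
    apply (F_analytic r).eqOn_of_preconnected_of_eventuallyEq analyticOnNhd_const
      isPreconnected_univ (Set.mem_univ z0)
    apply Filter.eventuallyEq_of_mem (Ioo_mem_nhds (show u < z0 by rw [hz0]; linarith) (show z0 < v by rw [hz0]; linarith))
    exact fun t ht => hconst t ⟨ht.1.le, ht.2.le⟩
  have hF : F r = fun _ => F r u := funext fun t => hval (Set.mem_univ t)
  have hd := F_deriv0 r
  rw [hF, deriv_const] at hd
  exact co_ne_zero r 1 hd.symm

lemma lint_inv_top {N' : ℝ} (hN' : 0 < N') :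
    ∫⁻ y in Set.Ici N', ENNReal.ofReal y⁻¹ = ⊤ := by
  by_contra h
  have hlt : ∫⁻ y in Set.Ici N', ENNReal.ofReal y⁻¹ < ⊤ := lt_top_iff_ne_top.2 h
  have hint : IntegrableOn (fun y : ℝ => y⁻¹) (Set.Ici N') := by
    refine ⟨measurable_inv.aestronglyMeasurable, ?_⟩
    rw [hasFiniteIntegral_iff_norm]
    have : ∫⁻ y in Set.Ici N', ENNReal.ofReal ‖y⁻¹‖ = ∫⁻ y in Set.Ici N', ENNReal.ofReal y⁻¹ := by
      apply setLIntegral_congr_fun measurableSet_Ici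
      intro y hy
      dsimp only
      rw [Real.norm_eq_abs, abs_of_nonneg (inv_nonneg.2 (le_trans hN'.le hy))]
    rw [this]
    exact hlt
  have hint2 : IntegrableOn (fun y : ℝ => y ^ (-1 : ℝ)) (Set.Ioi N') := by
    apply (hint.mono_set Set.Ioi_subset_Ici_self).congr_fun _ measurableSet_Ioi
    intro y hy
    exact (Real.rpow_neg_one y).symm
  have := (integrableOn_Ioi_rpow_iff hN').1 hint2
  linarith

end FrAux

set_option maxHeartbeats 1000000 in
/-- Type A singular point, necessity: for `r ≥ 1`, `x > 0` and integer `k` with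
`2 ≤ k < 7/4 + r/2`, the test integral over `S = [N,∞) × [ε,c]` diverges, where the
constants are chosen so that `f_r(xλ₂) > 0` on `[0,c]` and `|f_r(xλ₁)| < f_r(xλ₂)` on `S`. -/
theorem stmt_14 (r : ℕ) (hr : 1 ≤ r) (x : ℝ) (hx : 0 < x) (k : ℕ) (hk : 2 ≤ k)
    (hk' : (k : ℝ) < 7 / 4 + (r : ℝ) / 2) (ε c N : ℝ) (hε : 0 < ε) (hεc : ε < c)
    (hpos : ∀ s ∈ Set.Icc (0 : ℝ) c, 0 < fr r (x * s))
    (hlt : ∀ p ∈ Set.Ici N ×ˢ Set.Icc ε c, |fr r (x * p.1)| < fr r (x * p.2)) :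
    ∫⁻ p in Set.Ici N ×ˢ Set.Icc ε c,
      ENNReal.ofReal
        (|fr r (x * p.1) - fr r (x * p.2)| ^ (2 * k)
          / (p.1 ^ 2 - p.2 ^ 2) ^ (2 * k - 2) * (p.1 * p.2) ^ (1 + 2 * r)) = ⊤ := by
  classical
  have hbcont : Continuous fun s : ℝ => fr r (x * s) := FrAux.fr_cont r x
  -- N is above c
  have hcN : c < N := by
    by_contra hcontra
    push_neg at hcontra
    have hmem : ((max N ε, max N ε) : ℝ × ℝ) ∈ Set.Ici N ×ˢ Set.Icc ε c :=
      ⟨Set.mem_Ici.2 (le_max_left _ _), Set.mem_Icc.2 ⟨le_max_right _ _, max_le hcontra hεc.le⟩⟩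
    exact absurd (hlt _ hmem) (not_lt.2 (le_abs_self _))
  obtain ⟨s₁, hs₁, s₂, hs₂, hne⟩ := FrAux.exists_ne r hx hε hεc
  set d := |fr r (x * s₁) - fr r (x * s₂)| with hddef
  have hd : 0 < d := abs_sub_pos.2 hne
  -- small intervals where fr r (x * ·) is close to its values at s₁, s₂
  obtain ⟨δ₁, hδ₁pos, hδ₁⟩ :=
    Metric.continuousAt_iff.1 (hbcont.continuousAt (x := s₁)) (d/4) (by linarith)
  obtain ⟨δ₂, hδ₂pos, hδ₂⟩ :=
    Metric.continuousAt_iff.1 (hbcont.continuousAt (x := s₂)) (d/4) (by linarith)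
  set J₁ := Set.Icc ε c ∩ Metric.ball s₁ δ₁ with hJ₁def
  set J₂ := Set.Icc ε c ∩ Metric.ball s₂ δ₂ with hJ₂def
  have hJ₁meas : MeasurableSet J₁ := measurableSet_Icc.inter measurableSet_ball
  have hJ₂meas : MeasurableSet J₂ := measurableSet_Icc.inter measurableSet_ball
  have hJvol : ∀ (s0 δ : ℝ), 0 < δ → s0 ∈ Set.Icc ε c →
      0 < volume (Set.Icc ε c ∩ Metric.ball s0 δ) := by
    intro s0 δ hδ hs0
    rcases hs0 with ⟨ha, hb⟩
    have hsub : Set.Ioo (max ε (s0 - δ)) (min c (s0 + δ)) ⊆ Set.Icc ε c ∩ Metric.ball s0 δ := by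
      intro z hz
      refine ⟨⟨le_trans (le_max_left _ _) hz.1.le, le_trans hz.2.le (min_le_left _ _)⟩, ?_⟩
      rw [Metric.mem_ball, Real.dist_eq, abs_lt]
      constructor
      · have := lt_of_le_of_lt (le_max_right _ _) hz.1; linarith
      · have := lt_of_lt_of_le hz.2 (min_le_right _ _); linarith
    have hlt' : max ε (s0 - δ) < min c (s0 + δ) := by
      apply max_lt
      · exact lt_min hεc (by linarith)
      · exact lt_min (by linarith) (by linarith)
    calc (0:ℝ≥0∞) < volume (Set.Ioo (max ε (s0 - δ)) (min c (s0 + δ))) := by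
          rw [Real.volume_Ioo]; exact ENNReal.ofReal_pos.2 (by linarith)
      _ ≤ _ := measure_mono hsub
  set κ := min (volume J₁) (volume J₂) with hκdef
  have hκpos : 0 < κ := lt_min (hJvol s₁ δ₁ hδ₁pos hs₁) (hJvol s₂ δ₂ hδ₂pos hs₂)
  have hκne_top : κ ≠ ⊤ := by
    have : volume J₁ < ⊤ := lt_of_le_of_lt (measure_mono Set.inter_subset_left) measure_Icc_lt_top
    exact ne_top_of_le_ne_top this.ne (min_le_left _ _)
  set N' := max N 1 with hN'def
  have hN'1 : (1:ℝ) ≤ N' := le_max_right _ _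
  have hN'N : N ≤ N' := le_max_left _ _
  have hN'c : c < N' := lt_of_lt_of_le hcN hN'N
  have hexp : 2 * (2 * k - 2) ≤ 2 + 2 * r := by
    have h7 : (4 * k : ℝ) < 7 + 2 * r := by push_cast; linarith
    have h7' : 4 * k < 7 + 2 * r := by exact_mod_cast h7
    omega
  set C : ℝ := (d/4)^(2*k) * ε^(1+2*r) with hCdef
  have hCpos : 0 < C := by positivity
  have hmeas : Measurable (fun p : ℝ × ℝ => ENNReal.ofReal
      (|fr r (x*p.1) - fr r (x*p.2)|^(2*k) / (p.1^2-p.2^2)^(2*k-2) * (p.1*p.2)^(1+2*r))) := by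
    apply ENNReal.measurable_ofReal.comp
    apply Measurable.mul
    · apply Measurable.div
      · exact (((hbcont.comp continuous_fst).sub (hbcont.comp continuous_snd)).abs.pow (2*k)).measurable
      · exact (((continuous_fst.pow 2).sub (continuous_snd.pow 2)).pow (2*k-2)).measurable
    · exact ((continuous_fst.mul continuous_snd).pow (1+2*r)).measurable
  -- the key inner bound
  have key : ∀ y ∈ Set.Ici N',
      ENNReal.ofReal C * κ * ENNReal.ofReal y⁻¹ ≤
        ∫⁻ z in Set.Icc ε c, ENNReal.ofReal
          (|fr r (x*y) - fr r (x*z)|^(2*k) / (y^2-z^2)^(2*k-2) * (y*z)^(1+2*r)) := by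
    intro y hy
    have hy1 : (1:ℝ) ≤ y := le_trans hN'1 hy
    have hy0 : (0:ℝ) < y := by linarith
    have hyc : c < y := lt_of_lt_of_le hN'c hy
    have hcase : d/2 ≤ |fr r (x*y) - fr r (x*s₁)| ∨ d/2 ≤ |fr r (x*y) - fr r (x*s₂)| := by
      by_contra hcon
      push_neg at hcon
      have habs : d ≤ |fr r (x*y) - fr r (x*s₁)| + |fr r (x*y) - fr r (x*s₂)| := by
        calc d = |fr r (x*s₁) - fr r (x*s₂)| := hddef
          _ ≤ |fr r (x*s₁) - fr r (x*y)| + |fr r (x*y) - fr r (x*s₂)| := abs_sub_le _ _ _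
          _ = |fr r (x*y) - fr r (x*s₁)| + |fr r (x*y) - fr r (x*s₂)| := by
              rw [abs_sub_comm]
      linarith [hcon.1, hcon.2]
    obtain ⟨J, hJmeas, hJsub, hκJ, hlb⟩ : ∃ J : Set ℝ, MeasurableSet J ∧ J ⊆ Set.Icc ε c ∧
        κ ≤ volume J ∧ ∀ z ∈ J, d/4 ≤ |fr r (x*y) - fr r (x*z)| := by
      rcases hcase with hc1 | hc1
      · refine ⟨J₁, hJ₁meas, Set.inter_subset_left, min_le_left _ _, ?_⟩
        intro z hz
        have hz1 := hδ₁ hz.2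
        rw [Real.dist_eq] at hz1
        have htri : |fr r (x*y) - fr r (x*s₁)| ≤ |fr r (x*y) - fr r (x*z)| +
            |fr r (x*z) - fr r (x*s₁)| := abs_sub_le _ _ _
        linarith
      · refine ⟨J₂, hJ₂meas, Set.inter_subset_left, min_le_right _ _, ?_⟩
        intro z hz
        have hz1 := hδ₂ hz.2
        rw [Real.dist_eq] at hz1
        have htri : |fr r (x*y) - fr r (x*s₂)| ≤ |fr r (x*y) - fr r (x*z)| +
            |fr r (x*z) - fr r (x*s₂)| := abs_sub_le _ _ _
        linarith
    calc ENNReal.ofReal C * κ * ENNReal.ofReal y⁻¹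
        ≤ ENNReal.ofReal (C * y⁻¹) * volume J := by
          rw [ENNReal.ofReal_mul hCpos.le, mul_comm (ENNReal.ofReal C) κ, mul_assoc, mul_comm κ _]
          exact mul_le_mul_right hκJ _
      _ = ∫⁻ _ in J, ENNReal.ofReal (C * y⁻¹) := (setLIntegral_const J _).symm
      _ ≤ ∫⁻ z in J, ENNReal.ofReal
            (|fr r (x*y) - fr r (x*z)|^(2*k) / (y^2-z^2)^(2*k-2) * (y*z)^(1+2*r)) := by
          apply setLIntegral_mono' hJmeas
          intro z hz
          apply ENNReal.ofReal_le_ofReal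
          have hzc := hJsub hz
          have hz0 : 0 < z := lt_of_lt_of_le hε hzc.1
          have hzy : z < y := lt_of_le_of_lt hzc.2 hyc
          have hden : 0 < y^2 - z^2 := by nlinarith
          have hd4 := hlb z hz
          have step1 : (d/4)^(2*k) ≤ |fr r (x*y) - fr r (x*z)|^(2*k) :=
            pow_le_pow_left₀ (by positivity) hd4 _
          have step2 : (y^2 - z^2)^(2*k-2) ≤ (y^2)^(2*k-2) :=
            pow_le_pow_left₀ hden.le (by nlinarith) _
          have step3 : (y*ε)^(1+2*r) ≤ (y*z)^(1+2*r) :=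
            pow_le_pow_left₀ (by positivity) (mul_le_mul_of_nonneg_left hzc.1 hy0.le) _
          have h4 : (d/4)^(2*k) / (y^2)^(2*k-2) ≤
              |fr r (x*y) - fr r (x*z)|^(2*k) / (y^2 - z^2)^(2*k-2) :=
            div_le_div₀ (by positivity) step1 (pow_pos hden _) step2
          have h5 : (d/4)^(2*k) / (y^2)^(2*k-2) * (y*ε)^(1+2*r) ≤
              |fr r (x*y) - fr r (x*z)|^(2*k) / (y^2-z^2)^(2*k-2) * (y*z)^(1+2*r) :=
            mul_le_mul h4 step3 (by positivity) (le_trans (by positivity) h4)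
          refine le_trans ?_ h5
          rw [← pow_mul, mul_pow]
          have h7 : y^(2*(2*k-2)) ≤ y^(2+2*r) := pow_le_pow_right₀ hy1 hexp
          have hpow_pos : (0:ℝ) < y^(2*(2*k-2)) := pow_pos hy0 _
          rw [hCdef, div_mul_eq_mul_div, le_div_iff₀ hpow_pos]
          have e2 : y⁻¹ * y^(2+2*r) = y^(1+2*r) := by
            rw [show 2+2*r = (1+2*r)+1 by omega, pow_succ]
            field_simp
          have hmid : ε^(1+2*r) * y⁻¹ * y^(2*(2*k-2)) ≤ ε^(1+2*r) * y^(1+2*r) := by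
            have e1 : y⁻¹ * y^(2*(2*k-2)) ≤ y⁻¹ * y^(2+2*r) :=
              mul_le_mul_of_nonneg_left h7 (inv_nonneg.2 hy0.le)
            calc ε^(1+2*r) * y⁻¹ * y^(2*(2*k-2))
                = ε^(1+2*r) * (y⁻¹ * y^(2*(2*k-2))) := by ring
              _ ≤ ε^(1+2*r) * (y⁻¹ * y^(2+2*r)) :=
                  mul_le_mul_of_nonneg_left e1 (by positivity)
              _ = ε^(1+2*r) * y^(1+2*r) := by rw [e2]
          calc (d/4)^(2*k) * ε^(1+2*r) * y⁻¹ * y^(2*(2*k-2))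
              = (d/4)^(2*k) * (ε^(1+2*r) * y⁻¹ * y^(2*(2*k-2))) := by ring
            _ ≤ (d/4)^(2*k) * (ε^(1+2*r) * y^(1+2*r)) :=
                mul_le_mul_of_nonneg_left hmid (by positivity)
            _ = (d/4)^(2*k) * (y^(1+2*r) * ε^(1+2*r)) := by ring
      _ ≤ _ := lintegral_mono_set hJsub
  -- put everything together
  have hsub : Set.Ici N' ×ˢ Set.Icc ε c ⊆ Set.Ici N ×ˢ Set.Icc ε c :=
    Set.prod_mono (Set.Ici_subset_Ici.2 hN'N) subset_rfl
  rw [eq_top_iff]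
  refine le_trans ?_ (lintegral_mono_set hsub)
  rw [Measure.volume_eq_prod, ← Measure.prod_restrict,
    lintegral_prod _ hmeas.aemeasurable]
  have hconst_ne_top : ENNReal.ofReal C * κ ≠ ⊤ := ENNReal.mul_ne_top ENNReal.ofReal_ne_top hκne_top
  have hconst_ne_zero : ENNReal.ofReal C * κ ≠ 0 :=
    mul_ne_zero (ENNReal.ofReal_pos.2 hCpos).ne' hκpos.ne'
  calc (⊤ : ℝ≥0∞) = ENNReal.ofReal C * κ * ⊤ := (ENNReal.mul_top hconst_ne_zero).symm
    _ = ENNReal.ofReal C * κ * ∫⁻ y in Set.Ici N', ENNReal.ofReal y⁻¹ := by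
        rw [FrAux.lint_inv_top (show (0:ℝ) < N' by linarith)]
    _ = ∫⁻ y in Set.Ici N', ENNReal.ofReal C * κ * ENNReal.ofReal y⁻¹ :=
        (lintegral_const_mul' _ _ hconst_ne_top).symm
    _ ≤ _ := setLIntegral_mono' measurableSet_Ici key
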